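/- Let a < b and c < d be real numbers, Δ = [a,b] × [c,d], let f : Δ → ℝ be (L₁, L₂)-Lipschitz on Δ with L₁, L₂ > 0, and define H : [0,1] × [0,1] → ℝ by H(t,s) = (1/((b-a)(d-c))) ∫_a^b ∫_c^d f(t·x + (1-t)·(a+b)/2, s·y + (1-s)·(c+d)/2) dy dx. Then for all t₁, t₂, s₁, s₂ ∈ [0,1], |H(t₂, s₂) − H(t₁, s₁)| ≤ (L₁·(b-a)/4)·|t₂ − t₁| + (L₂·(d-c)/4)·|s₂ − s₁|; in particular, H is Lipschitz on [0,1] × [0,1]. -/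

import Mathlib

open MeasureTheory Set intervalIntegral

lemma integral_abs_sub_mid (a b : ℝ) (hab : a ≤ b) :
    ∫ x in a..b, |x - (a + b) / 2| = (b - a) ^ 2 / 4 := by
  set m := (a + b) / 2 with hm
  have ham : a ≤ m := by rw [hm]; linarith
  have hmb : m ≤ b := by rw [hm]; linarith
  have habs : Continuous fun x : ℝ => |x - m| := (continuous_id.sub continuous_const).abs
  have i1 : ∫ x in a..m, |x - m| = ∫ x in a..m, (m - x) := by
    apply intervalIntegral.integral_congr
    intro x hx
    rw [uIcc_of_le ham] at hx
    show |x - m| = m - x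
    rw [abs_sub_comm, abs_of_nonneg (by linarith [hx.2])]
  have i2 : ∫ x in m..b, |x - m| = ∫ x in m..b, (x - m) := by
    apply intervalIntegral.integral_congr
    intro x hx
    rw [uIcc_of_le hmb] at hx
    show |x - m| = x - m
    rw [abs_of_nonneg (by linarith [hx.1])]
  have c1 : ∫ x in a..m, (m - x) = (m - a) ^ 2 / 2 := by
    rw [intervalIntegral.integral_sub intervalIntegrable_const intervalIntegrable_id]
    simp [integral_id]
    ring
  have c2 : ∫ x in m..b, (x - m) = (b - m) ^ 2 / 2 := by
    rw [intervalIntegral.integral_sub intervalIntegrable_id intervalIntegrable_const]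
    simp [integral_id]
    ring
  rw [← intervalIntegral.integral_add_adjacent_intervals
    (habs.intervalIntegrable a m) (habs.intervalIntegrable m b), i1, i2, c1, c2, hm]
  ring

lemma mapping_H_key
    (a b c d L₁ L₂ : ℝ) (hab : a < b) (hcd : c < d) (hL₁ : 0 < L₁) (hL₂ : 0 < L₂)
    (f : ℝ → ℝ → ℝ)
    (hf : ∀ t₁ ∈ Icc a b, ∀ t₂ ∈ Icc a b, ∀ s₁ ∈ Icc c d, ∀ s₂ ∈ Icc c d,
      |f t₁ s₁ - f t₂ s₂| ≤ L₁ * |t₁ - t₂| + L₂ * |s₁ - s₂|)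
    (H : ℝ → ℝ → ℝ)
    (hH : ∀ t s, H t s = (1 / ((b - a) * (d - c))) *
      ∫ x in a..b, ∫ y in c..d,
        f (t * x + (1 - t) * ((a + b) / 2)) (s * y + (1 - s) * ((c + d) / 2))) :
    ∀ t₁ ∈ Icc (0:ℝ) 1, ∀ t₂ ∈ Icc (0:ℝ) 1, ∀ s₁ ∈ Icc (0:ℝ) 1, ∀ s₂ ∈ Icc (0:ℝ) 1,
      |H t₂ s₂ - H t₁ s₁| ≤
        (L₁ * (b - a) / 4) * |t₂ - t₁| + (L₂ * (d - c) / 4) * |s₂ - s₁| := by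
  intro t₁ ht₁ t₂ ht₂ s₁ hs₁ s₂ hs₂
  set M₁ : ℝ := (a + b) / 2 with hM₁
  set M₂ : ℝ := (c + d) / 2 with hM₂
  set F : ℝ → ℝ → ℝ → ℝ → ℝ :=
    fun t s x y => f (t * x + (1 - t) * M₁) (s * y + (1 - s) * M₂) with hF
  -- memberships
  have hmem1 : ∀ t ∈ Icc (0:ℝ) 1, ∀ x ∈ Icc a b, t * x + (1 - t) * M₁ ∈ Icc a b := by
    intro t ht x hx
    constructor <;> [nlinarith [ht.1, ht.2, hx.1, hx.2]; nlinarith [ht.1, ht.2, hx.1, hx.2]]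
  have hmem2 : ∀ s ∈ Icc (0:ℝ) 1, ∀ y ∈ Icc c d, s * y + (1 - s) * M₂ ∈ Icc c d := by
    intro s hs y hy
    constructor <;> [nlinarith [hs.1, hs.2, hy.1, hy.2]; nlinarith [hs.1, hs.2, hy.1, hy.2]]
  -- pointwise Lipschitz bound of F in (t,s)
  have hpt : ∀ u₁ ∈ Icc (0:ℝ) 1, ∀ u₂ ∈ Icc (0:ℝ) 1, ∀ v₁ ∈ Icc (0:ℝ) 1, ∀ v₂ ∈ Icc (0:ℝ) 1,
      ∀ x ∈ Icc a b, ∀ y ∈ Icc c d,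
      |F u₂ v₂ x y - F u₁ v₁ x y| ≤ L₁ * (|u₂ - u₁| * |x - M₁|) + L₂ * (|v₂ - v₁| * |y - M₂|) := by
    intro u₁ hu₁ u₂ hu₂ v₁ hv₁ v₂ hv₂ x hx y hy
    have h := hf _ (hmem1 u₂ hu₂ x hx) _ (hmem1 u₁ hu₁ x hx)
      _ (hmem2 v₂ hv₂ y hy) _ (hmem2 v₁ hv₁ y hy)
    have e1 : (u₂ * x + (1 - u₂) * M₁) - (u₁ * x + (1 - u₁) * M₁) = (u₂ - u₁) * (x - M₁) := by ring
    have e2 : (v₂ * y + (1 - v₂) * M₂) - (v₁ * y + (1 - v₁) * M₂) = (v₂ - v₁) * (y - M₂) := by ring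
    rw [e1, e2, abs_mul, abs_mul] at h
    exact h
  -- pointwise Lipschitz of F in y
  have hFy : ∀ t ∈ Icc (0:ℝ) 1, ∀ s ∈ Icc (0:ℝ) 1, ∀ x ∈ Icc a b,
      ∀ y₁ ∈ Icc c d, ∀ y₂ ∈ Icc c d, |F t s x y₁ - F t s x y₂| ≤ L₂ * |y₁ - y₂| := by
    intro t ht s hs x hx y₁ hy₁ y₂ hy₂
    have h := hf _ (hmem1 t ht x hx) _ (hmem1 t ht x hx)
      _ (hmem2 s hs y₁ hy₁) _ (hmem2 s hs y₂ hy₂)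
    have e2 : (s * y₁ + (1 - s) * M₂) - (s * y₂ + (1 - s) * M₂) = s * (y₁ - y₂) := by ring
    rw [sub_self, abs_zero, mul_zero, zero_add, e2, abs_mul] at h
    refine h.trans ?_
    have h1 : |s| ≤ 1 := by rw [abs_of_nonneg hs.1]; exact hs.2
    have h2 : |s| * |y₁ - y₂| ≤ |y₁ - y₂| := mul_le_of_le_one_left (abs_nonneg _) h1
    exact mul_le_mul_of_nonneg_left h2 hL₂.le
  -- inner interval integrability
  have hinner : ∀ t ∈ Icc (0:ℝ) 1, ∀ s ∈ Icc (0:ℝ) 1, ∀ x ∈ Icc a b,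
      IntervalIntegrable (fun y => F t s x y) volume c d := by
    intro t ht s hs x hx
    have hlip : LipschitzOnWith L₂.toNNReal (fun y => F t s x y) (Icc c d) := by
      apply LipschitzOnWith.of_dist_le_mul
      intro y₁ hy₁ y₂ hy₂
      rw [Real.dist_eq, Real.dist_eq, Real.coe_toNNReal L₂ hL₂.le]
      exact hFy t ht s hs x hx y₁ hy₁ y₂ hy₂
    exact (hlip.continuousOn.mono (by rw [uIcc_of_le hcd.le])).intervalIntegrable
  -- the inner integral function g
  set g : ℝ → ℝ → ℝ → ℝ := fun t s x => ∫ y in c..d, F t s x y with hg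
  -- g is Lipschitz in x, hence continuous, hence interval integrable
  have houter : ∀ t ∈ Icc (0:ℝ) 1, ∀ s ∈ Icc (0:ℝ) 1,
      IntervalIntegrable (g t s) volume a b := by
    intro t ht s hs
    have hlip : LipschitzOnWith (L₁ * (d - c)).toNNReal (g t s) (Icc a b) := by
      apply LipschitzOnWith.of_dist_le_mul
      intro x₁ hx₁ x₂ hx₂
      rw [Real.dist_eq, Real.dist_eq, Real.coe_toNNReal _ (mul_nonneg hL₁.le (by linarith))]
      have hsub : g t s x₁ - g t s x₂ = ∫ y in c..d, (F t s x₁ y - F t s x₂ y) :=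
        (intervalIntegral.integral_sub (hinner t ht s hs x₁ hx₁) (hinner t ht s hs x₂ hx₂)).symm
      rw [hsub]
      have hb : ∀ y ∈ Set.uIoc c d, ‖F t s x₁ y - F t s x₂ y‖ ≤ L₁ * |x₁ - x₂| := by
        intro y hy
        have hy' : y ∈ Icc c d := mem_Icc_of_Ioc (by rwa [uIoc_of_le hcd.le] at hy)
        have h := hf _ (hmem1 t ht x₁ hx₁) _ (hmem1 t ht x₂ hx₂)
          _ (hmem2 s hs y hy') _ (hmem2 s hs y hy')
        have e1 : (t * x₁ + (1 - t) * M₁) - (t * x₂ + (1 - t) * M₁) = t * (x₁ - x₂) := by ring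
        rw [sub_self, abs_zero, mul_zero, add_zero, e1, abs_mul] at h
        refine h.trans ?_
        have : |t| ≤ 1 := by rw [abs_of_nonneg ht.1]; exact ht.2
        have : |t| * |x₁ - x₂| ≤ 1 * |x₁ - x₂| := by
          apply mul_le_mul_of_nonneg_right this (abs_nonneg _)
        nlinarith [abs_nonneg (x₁ - x₂)]
      calc ‖∫ y in c..d, (F t s x₁ y - F t s x₂ y)‖
          ≤ L₁ * |x₁ - x₂| * |d - c| :=
            intervalIntegral.norm_integral_le_of_norm_le_const hb
        _ = L₁ * (d - c) * |x₁ - x₂| := by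
            rw [abs_of_nonneg (by linarith : (0:ℝ) ≤ d - c)]; ring
    exact (hlip.continuousOn.mono (by rw [uIcc_of_le hab.le])).intervalIntegrable
  -- difference of inner integrals bounded
  have hgbound : ∀ x ∈ Icc a b, |g t₂ s₂ x - g t₁ s₁ x| ≤
      L₁ * |t₂ - t₁| * |x - M₁| * (d - c) + L₂ * |s₂ - s₁| * ((d - c) ^ 2 / 4) := by
    intro x hx
    have hsub : g t₂ s₂ x - g t₁ s₁ x = ∫ y in c..d, (F t₂ s₂ x y - F t₁ s₁ x y) :=
      (intervalIntegral.integral_sub (hinner t₂ ht₂ s₂ hs₂ x hx) (hinner t₁ ht₁ s₁ hs₁ x hx)).symm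
    rw [hsub]
    have hi1 : IntervalIntegrable (fun y => |F t₂ s₂ x y - F t₁ s₁ x y|) volume c d :=
      ((hinner t₂ ht₂ s₂ hs₂ x hx).sub (hinner t₁ ht₁ s₁ hs₁ x hx)).abs
    have hc2 : Continuous fun y : ℝ => L₂ * (|s₂ - s₁| * |y - M₂|) :=
      continuous_const.mul (continuous_const.mul ((continuous_id.sub continuous_const).abs))
    have hi2 : IntervalIntegrable
        (fun y => L₁ * (|t₂ - t₁| * |x - M₁|) + L₂ * (|s₂ - s₁| * |y - M₂|)) volume c d :=
      (continuous_const.add hc2).intervalIntegrable _ _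
    calc |∫ y in c..d, (F t₂ s₂ x y - F t₁ s₁ x y)|
        ≤ ∫ y in c..d, |F t₂ s₂ x y - F t₁ s₁ x y| :=
          by
            have h2 := intervalIntegral.norm_integral_le_integral_norm
              (f := fun y => F t₂ s₂ x y - F t₁ s₁ x y) (μ := volume) hcd.le
            simpa [Real.norm_eq_abs] using h2
      _ ≤ ∫ y in c..d, (L₁ * (|t₂ - t₁| * |x - M₁|) + L₂ * (|s₂ - s₁| * |y - M₂|)) := by
          apply intervalIntegral.integral_mono_on hcd.le hi1 hi2
          intro y hy
          exact hpt t₁ ht₁ t₂ ht₂ s₁ hs₁ s₂ hs₂ x hx y hy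
      _ = L₁ * |t₂ - t₁| * |x - M₁| * (d - c) + L₂ * |s₂ - s₁| * ((d - c) ^ 2 / 4) := by
          rw [intervalIntegral.integral_add intervalIntegrable_const
            (hc2.intervalIntegrable c d),
            intervalIntegral.integral_const,
            intervalIntegral.integral_const_mul, intervalIntegral.integral_const_mul,
            hM₂, integral_abs_sub_mid c d hcd.le]
          simp [smul_eq_mul]
          ring
  -- main estimate
  have hHdiff : H t₂ s₂ - H t₁ s₁ =
      (1 / ((b - a) * (d - c))) * ∫ x in a..b, (g t₂ s₂ x - g t₁ s₁ x) := by
    rw [hH, hH, ← mul_sub,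
      intervalIntegral.integral_sub (houter t₂ ht₂ s₂ hs₂) (houter t₁ ht₁ s₁ hs₁)]
  have hba : (0:ℝ) < b - a := sub_pos.mpr hab
  have hdc : (0:ℝ) < d - c := sub_pos.mpr hcd
  have hC : (0:ℝ) < 1 / ((b - a) * (d - c)) := by positivity
  have hbig : |∫ x in a..b, (g t₂ s₂ x - g t₁ s₁ x)| ≤
      L₁ * |t₂ - t₁| * ((b - a) ^ 2 / 4) * (d - c) + L₂ * |s₂ - s₁| * ((d - c) ^ 2 / 4) * (b - a) := by
    have hi1 : IntervalIntegrable (fun x => |g t₂ s₂ x - g t₁ s₁ x|) volume a b :=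
      ((houter t₂ ht₂ s₂ hs₂).sub (houter t₁ ht₁ s₁ hs₁)).abs
    have hc2 : Continuous fun x : ℝ => L₁ * |t₂ - t₁| * |x - M₁| * (d - c) + L₂ * |s₂ - s₁| * ((d - c) ^ 2 / 4) :=
      ((((continuous_const.mul ((continuous_id.sub continuous_const).abs)).mul
        continuous_const)).add continuous_const)
    have hc3 : Continuous fun x : ℝ => L₁ * |t₂ - t₁| * (d - c) * |x - M₁| :=
      continuous_const.mul ((continuous_id.sub continuous_const).abs)
    have hi2 : IntervalIntegrable
        (fun x => L₁ * |t₂ - t₁| * |x - M₁| * (d - c) + L₂ * |s₂ - s₁| * ((d - c) ^ 2 / 4))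
        volume a b :=
      hc2.intervalIntegrable _ _
    calc |∫ x in a..b, (g t₂ s₂ x - g t₁ s₁ x)|
        ≤ ∫ x in a..b, |g t₂ s₂ x - g t₁ s₁ x| :=
          by
            have h2 := intervalIntegral.norm_integral_le_integral_norm
              (f := fun x => g t₂ s₂ x - g t₁ s₁ x) (μ := volume) hab.le
            simpa [Real.norm_eq_abs] using h2
      _ ≤ ∫ x in a..b, (L₁ * |t₂ - t₁| * |x - M₁| * (d - c) + L₂ * |s₂ - s₁| * ((d - c) ^ 2 / 4)) :=
          intervalIntegral.integral_mono_on hab.le hi1 hi2 hgbound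
      _ = L₁ * |t₂ - t₁| * ((b - a) ^ 2 / 4) * (d - c) + L₂ * |s₂ - s₁| * ((d - c) ^ 2 / 4) * (b - a) := by
          have e : ∀ x : ℝ, L₁ * |t₂ - t₁| * |x - M₁| * (d - c) + L₂ * |s₂ - s₁| * ((d - c) ^ 2 / 4)
              = (L₁ * |t₂ - t₁| * (d - c)) * |x - M₁| + L₂ * |s₂ - s₁| * ((d - c) ^ 2 / 4) := by
            intro x; ring
          simp_rw [e]
          rw [intervalIntegral.integral_add (hc3.intervalIntegrable a b)
            intervalIntegrable_const,
            intervalIntegral.integral_const_mul, intervalIntegral.integral_const,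
            hM₁, integral_abs_sub_mid a b hab.le]
          simp [smul_eq_mul]
          ring
  rw [hHdiff, abs_mul, abs_of_pos hC]
  calc (1 / ((b - a) * (d - c))) * |∫ x in a..b, (g t₂ s₂ x - g t₁ s₁ x)|
      ≤ (1 / ((b - a) * (d - c))) *
        (L₁ * |t₂ - t₁| * ((b - a) ^ 2 / 4) * (d - c) + L₂ * |s₂ - s₁| * ((d - c) ^ 2 / 4) * (b - a)) := by
        exact mul_le_mul_of_nonneg_left hbig hC.le
    _ = (L₁ * (b - a) / 4) * |t₂ - t₁| + (L₂ * (d - c) / 4) * |s₂ - s₁| := by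
        field_simp [hba.ne', hdc.ne']

/-- Theorem 7(i): the mapping
`H(t,s) = (1/((b-a)(d-c))) ∫_a^b ∫_c^d f(tx+(1-t)(a+b)/2, sy+(1-s)(c+d)/2) dy dx`
associated with an `(L₁, L₂)`-Lipschitz function `f` on `[a,b] × [c,d]` satisfies
`|H(t₂,s₂) − H(t₁,s₁)| ≤ (L₁(b-a)/4)|t₂-t₁| + (L₂(d-c)/4)|s₂-s₁|` on
`[0,1] × [0,1]`; in particular `H` is Lipschitz on `[0,1] × [0,1]`. -/
theorem mapping_H_lipschitz
    (a b c d L₁ L₂ : ℝ) (hab : a < b) (hcd : c < d) (hL₁ : 0 < L₁) (hL₂ : 0 < L₂)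
    (f : ℝ → ℝ → ℝ)
    (hf : ∀ t₁ ∈ Icc a b, ∀ t₂ ∈ Icc a b, ∀ s₁ ∈ Icc c d, ∀ s₂ ∈ Icc c d,
      |f t₁ s₁ - f t₂ s₂| ≤ L₁ * |t₁ - t₂| + L₂ * |s₁ - s₂|)
    (H : ℝ → ℝ → ℝ)
    (hH : ∀ t s, H t s = (1 / ((b - a) * (d - c))) *
      ∫ x in a..b, ∫ y in c..d,
        f (t * x + (1 - t) * ((a + b) / 2)) (s * y + (1 - s) * ((c + d) / 2))) :
    (∀ t₁ ∈ Icc (0:ℝ) 1, ∀ t₂ ∈ Icc (0:ℝ) 1, ∀ s₁ ∈ Icc (0:ℝ) 1, ∀ s₂ ∈ Icc (0:ℝ) 1,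
      |H t₂ s₂ - H t₁ s₁| ≤
        (L₁ * (b - a) / 4) * |t₂ - t₁| + (L₂ * (d - c) / 4) * |s₂ - s₁|) ∧
    ∃ K : NNReal, LipschitzOnWith K (fun p : ℝ × ℝ => H p.1 p.2)
      (Icc (0:ℝ) 1 ×ˢ Icc (0:ℝ) 1) := by
  have key := mapping_H_key a b c d L₁ L₂ hab hcd hL₁ hL₂ f hf H hH
  refine ⟨key, ⟨(L₁ * (b - a) / 4 + L₂ * (d - c) / 4).toNNReal, ?_⟩⟩
  apply LipschitzOnWith.of_dist_le_mul
  intro p hp q hq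
  have hp1 : p.1 ∈ Icc (0:ℝ) 1 := hp.1
  have hp2 : p.2 ∈ Icc (0:ℝ) 1 := hp.2
  have hq1 : q.1 ∈ Icc (0:ℝ) 1 := hq.1
  have hq2 : q.2 ∈ Icc (0:ℝ) 1 := hq.2
  have hk := key q.1 hq1 p.1 hp1 q.2 hq2 p.2 hp2
  have hK : (0:ℝ) ≤ L₁ * (b - a) / 4 + L₂ * (d - c) / 4 := by nlinarith
  rw [Real.dist_eq, Real.coe_toNNReal _ hK]
  have h1 : |p.1 - q.1| ≤ dist p q := by rw [← Real.dist_eq]; rw [Prod.dist_eq]; exact le_max_left _ _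
  have h2 : |p.2 - q.2| ≤ dist p q := by rw [← Real.dist_eq]; rw [Prod.dist_eq]; exact le_max_right _ _
  have hd : (0:ℝ) ≤ dist p q := dist_nonneg
  calc |H p.1 p.2 - H q.1 q.2|
      ≤ (L₁ * (b - a) / 4) * |p.1 - q.1| + (L₂ * (d - c) / 4) * |p.2 - q.2| := hk
    _ ≤ (L₁ * (b - a) / 4) * dist p q + (L₂ * (d - c) / 4) * dist p q := by
        have c1 : (0:ℝ) ≤ L₁ * (b - a) / 4 := by nlinarith
        have c2 : (0:ℝ) ≤ L₂ * (d - c) / 4 := by nlinarith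
        exact add_le_add (mul_le_mul_of_nonneg_left h1 c1) (mul_le_mul_of_nonneg_left h2 c2)
    _ = (L₁ * (b - a) / 4 + L₂ * (d - c) / 4) * dist p q := by ring
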